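/- For integer M ≥ 2 and nonnegative integer n, the value of η^{(M)}_{n,l} at r = 0 is η^{(M)}_{n,l}(0) = δ_{l,0} · (2(-1)^n / Γ(M/2)) · sqrt((n + (M-1)/2) Γ(n+M-1)/n!), where the value at 0 is taken as the limit r → 0⁺. -/

import Mathlib

open Finset

/-- Pochhammer (rising factorial) `(a)_k`. -/
noncomputable def poch (a : ℝ) (k : ℕ) : ℝ := ∏ i ∈ Finset.range k, (a + i)

/-- Terminating Gauss hypergeometric series `₂F₁(-n, b; c; x)`. -/
noncomputable def F21fin (n : ℕ) (b c x : ℝ) : ℝ :=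
  ∑ k ∈ Finset.range (n + 1),
    poch (-(n : ℝ)) k * poch b k / (poch c k * k.factorial) * x ^ k

/-- The radial functions `η^{(M)}_{n,l}(r)`. -/
noncomputable def eta (M n l : ℕ) (r : ℝ) : ℝ :=
  2 / Real.Gamma ((l : ℝ) + M / 2) *
    Real.sqrt (((n : ℝ) + l + ((M : ℝ) - 1) / 2) *
      Real.Gamma ((n : ℝ) + 2 * l + M - 1) / n.factorial) *
    (r ^ l / (r ^ 2 + 1) ^ ((l : ℝ) + M / 2)) *
    F21fin n ((n : ℝ) + 2 * l + M - 1) ((l : ℝ) + M / 2) (1 / (r ^ 2 + 1))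

lemma poch_zero (a : ℝ) : poch a 0 = 1 := by simp [poch]


lemma poch_succ (a : ℝ) (k : ℕ) : poch a (k+1) = poch a k * (a + k) := by
  simp [poch, Finset.prod_range_succ]


lemma poch_succ_left (a : ℝ) (k : ℕ) : poch a (k+1) = a * poch (a+1) k := by
  rw [poch, Finset.prod_range_succ']
  rw [mul_comm]
  simp only [Nat.cast_zero, add_zero]
  congr 1
  apply Finset.prod_congr rfl
  intro i _
  push_cast
  ring


lemma poch_add (a : ℝ) (k m : ℕ) : poch a (k + m) = poch a k * poch (a + k) m := by
  induction m with
  | zero => simp [poch_zero]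
  | succ m ih =>
    rw [show k + (m+1) = (k+m)+1 by ring, poch_succ, ih, poch_succ]
    push_cast
    ring


lemma poch_pos {a : ℝ} (ha : 0 < a) (k : ℕ) : 0 < poch a k := by
  apply Finset.prod_pos
  intro i _
  positivity


lemma poch_neg_nat (n : ℕ) : ∀ k ≤ n,
    poch (-(n:ℝ)) k = (-1)^k * (n.choose k) * k.factorial := by
  intro k
  induction k with
  | zero => intro _; simp [poch_zero]
  | succ k ih =>
    intro h
    have hk : k ≤ n := Nat.le_of_succ_le h
    have key : (n.choose (k+1) : ℝ) * (k+1) = (n.choose k : ℝ) * ((n:ℝ) - k) := by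
      have h1 := Nat.choose_succ_right_eq n k
      have h2 : ((n - k : ℕ) : ℝ) = (n:ℝ) - k := by
        rw [Nat.cast_sub hk]
      calc (n.choose (k+1) : ℝ) * (k+1) = ((n.choose (k+1) * (k+1) : ℕ) : ℝ) := by push_cast; ring
        _ = ((n.choose k * (n - k) : ℕ) : ℝ) := by rw [h1]
        _ = (n.choose k : ℝ) * ((n:ℝ) - k) := by push_cast [h2]; ring
    rw [poch_succ, ih hk, Nat.factorial_succ]
    push_cast
    linear_combination ((-1:ℝ)^k * (k.factorial : ℝ)) * key



lemma sum_pascal (n : ℕ) (A : ℕ → ℝ) :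
    ∑ k ∈ range (n+2), (-1:ℝ)^k * ((n+1).choose k) * A k
      = ∑ k ∈ range (n+1), (-1:ℝ)^k * (n.choose k) * (A k - A (k+1)) := by
  have e0 : ∑ k ∈ range (n+2), (-1:ℝ)^k * ((n+1).choose k) * A k
      = (∑ k ∈ range (n+1), (-1:ℝ)^(k+1) * ((n+1).choose (k+1)) * A (k+1))
        + (-1:ℝ)^0 * ((n+1).choose 0) * A 0 :=
    Finset.sum_range_succ' (fun k => (-1:ℝ)^k * ((n+1).choose k) * A k) (n+1)
  have e1 : ∀ k ∈ range (n+1),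
      (-1:ℝ)^(k+1) * ((n+1).choose (k+1)) * A (k+1)
        = -((-1:ℝ)^k * (n.choose k) * A (k+1))
          + (-1:ℝ)^(k+1) * (n.choose (k+1)) * A (k+1) := by
    intro k _
    have : ((n+1).choose (k+1) : ℝ) = (n.choose k : ℝ) + (n.choose (k+1) : ℝ) := by
      exact_mod_cast congrArg (Nat.cast (R := ℝ)) (Nat.choose_succ_succ n k)
    rw [this]; ring
  have e2 : (∑ k ∈ range (n+1), (-1:ℝ)^(k+1) * (n.choose (k+1)) * A (k+1))
      + (-1:ℝ)^0 * (n.choose 0) * A 0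
      = ∑ k ∈ range (n+2), (-1:ℝ)^k * (n.choose k) * A k :=
    (Finset.sum_range_succ' (fun k => (-1:ℝ)^k * (n.choose k) * A k) (n+1)).symm
  have e3 : ∑ k ∈ range (n+2), (-1:ℝ)^k * (n.choose k) * A k
      = ∑ k ∈ range (n+1), (-1:ℝ)^k * (n.choose k) * A k := by
    rw [Finset.sum_range_succ, Nat.choose_succ_self]
    simp
  rw [e0, Finset.sum_congr rfl e1, Finset.sum_add_distrib]
  simp only [pow_zero, Nat.choose_zero_right, Nat.cast_one, one_mul] at e2 ⊢
  rw [add_assoc, e2, e3]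
  rw [← Finset.sum_add_distrib]
  apply Finset.sum_congr rfl
  intro k _
  ring


lemma vdm (n : ℕ) : ∀ (b c : ℝ),
    ∑ k ∈ range (n+1), (-1:ℝ)^k * (n.choose k) * (poch b k * poch (c+k) (n-k))
      = poch (c-b) n := by
  induction n with
  | zero => intro b c; simp [poch_zero]
  | succ n ih =>
    intro b c
    rw [show n+1+1 = n+2 by ring,
      sum_pascal n (fun k => poch b k * poch (c+k) (n+1-k))]
    have step2 : ∀ k ∈ range (n+1),
        (-1:ℝ)^k * (n.choose k) *
          ((fun k => poch b k * poch (c+(k:ℝ)) (n+1-k)) k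
            - (fun k => poch b k * poch (c+(k:ℝ)) (n+1-k)) (k+1))
          = (c - b) * ((-1:ℝ)^k * (n.choose k) * (poch b k * poch ((c+1)+k) (n-k))) := by
      intro k hk
      have hk' : k ≤ n := Nat.lt_succ_iff.mp (Finset.mem_range.mp hk)
      simp only
      have e1 : poch (c+(k:ℝ)) (n+1-k) = (c+k) * poch ((c+k)+1) (n-k) := by
        rw [show n+1-k = (n-k)+1 by omega, poch_succ_left]
      have e2 : poch b (k+1) = poch b k * (b+k) := poch_succ b k
      have e3 : poch (c+((k:ℕ)+1:ℕ)) (n+1-(k+1)) = poch ((c+k)+1) (n-k) := by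
        rw [show n+1-(k+1) = n-k by omega]
        push_cast
        ring_nf
      push_cast at e3 ⊢
      rw [e1, e2, e3, show (c+1)+(k:ℝ) = (c+(k:ℝ))+1 by ring]
      ring
    rw [Finset.sum_congr rfl step2, ← Finset.mul_sum, ih b (c+1),
      show (c+1)-b = (c-b)+1 by ring, ← poch_succ_left]


lemma poch_reflect (n : ℕ) (c : ℝ) :
    poch (1 - c - n) n = (-1:ℝ)^n * poch c n := by
  have h1 : poch (1 - c - n) n = ∏ j ∈ range n, -(c + ((n - 1 - j : ℕ) : ℝ)) := by
    rw [poch]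
    apply Finset.prod_congr rfl
    intro i hi
    have hi' : i < n := Finset.mem_range.mp hi
    have : ((n - 1 - i : ℕ) : ℝ) = (n:ℝ) - 1 - i := by
      have : n - 1 - i = n - (1 + i) := by omega
      rw [this, Nat.cast_sub (by omega)]
      push_cast; ring
    rw [this]; ring
  rw [h1, Finset.prod_range_reflect (fun j => -(c + (j:ℝ))) n]
  calc ∏ j ∈ range n, -(c + (j:ℝ)) = ∏ j ∈ range n, (-1:ℝ) * (c + (j:ℝ)) := by
        apply Finset.prod_congr rfl; intro j _; ring
    _ = (-1:ℝ)^n * poch c n := by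
        rw [Finset.prod_mul_distrib, Finset.prod_const, Finset.card_range, poch]


lemma F21fin_one (n : ℕ) (c : ℝ) (hc : 0 < c) :
    F21fin n ((n:ℝ) + 2*c - 1) c 1 = (-1:ℝ)^n := by
  set b := (n:ℝ) + 2*c - 1 with hb
  have hpos : 0 < poch c n := poch_pos hc n
  have key : poch c n * F21fin n b c 1 = poch (c - b) n := by
    rw [F21fin, Finset.mul_sum, ← vdm n b c]
    apply Finset.sum_congr rfl
    intro k hk
    have hk' : k ≤ n := Nat.lt_succ_iff.mp (Finset.mem_range.mp hk)
    rw [poch_neg_nat n k hk']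
    have split : poch c n = poch c k * poch (c+k) (n-k) := by
      rw [← poch_add, Nat.add_sub_cancel' hk']
    have h1 : poch c k ≠ 0 := ne_of_gt (poch_pos hc k)
    have h2 : (k.factorial : ℝ) ≠ 0 := by positivity
    rw [split]
    field_simp
    ring
  have hrefl : poch (c - b) n = (-1:ℝ)^n * poch c n := by
    rw [show c - b = 1 - c - n by rw [hb]; ring, poch_reflect]
  rw [hrefl] at key
  exact mul_left_cancel₀ (ne_of_gt hpos) (key.trans (mul_comm _ _))


theorem stmt10 (M : ℕ) (hM : 2 ≤ M) (n l : ℕ) :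
    Filter.Tendsto (fun r : ℝ => eta M n l r) (nhdsWithin 0 (Set.Ioi 0))
      (nhds ((if l = 0 then 1 else 0) * (2 * (-1 : ℝ) ^ n / Real.Gamma ((M : ℝ) / 2)) *
        Real.sqrt (((n : ℝ) + ((M : ℝ) - 1) / 2) * Real.Gamma ((n : ℝ) + M - 1) /
          n.factorial))) := by
  set K : ℝ := 2 / Real.Gamma ((l : ℝ) + M / 2) *
    Real.sqrt (((n : ℝ) + l + ((M : ℝ) - 1) / 2) *
      Real.Gamma ((n : ℝ) + 2 * l + M - 1) / n.factorial) with hK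
  set b : ℝ := (n : ℝ) + 2 * l + M - 1 with hb
  set c : ℝ := (l : ℝ) + M / 2 with hc
  have h1 : Filter.Tendsto (fun r : ℝ => eta M n l r) (nhds 0)
      (nhds (K * ((0:ℝ)^l / (1:ℝ) ^ c) * F21fin n b c 1)) := by
    have hbase : Filter.Tendsto (fun r : ℝ => r ^ 2 + 1) (nhds 0) (nhds 1) := by
      have : Continuous (fun r : ℝ => r ^ 2 + 1) := by continuity
      simpa using this.tendsto (0:ℝ)
    have hden : Filter.Tendsto (fun r : ℝ => (r ^ 2 + 1) ^ c) (nhds 0) (nhds ((1:ℝ) ^ c)) :=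
      ((Real.continuousAt_rpow_const 1 c (Or.inl one_ne_zero)).tendsto).comp hbase
    have hnum : Filter.Tendsto (fun r : ℝ => r ^ l) (nhds (0:ℝ)) (nhds ((0:ℝ)^l)) :=
      (continuous_pow l).tendsto 0
    have hone : (1:ℝ) ^ c ≠ 0 := by rw [Real.one_rpow]; norm_num
    have harg : Filter.Tendsto (fun r : ℝ => 1 / (r ^ 2 + 1)) (nhds 0) (nhds 1) := by
      have hcont : Continuous (fun r : ℝ => 1 / (r ^ 2 + 1)) := by
        apply Continuous.div continuous_const (by continuity)
        intro x; positivity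
      simpa using hcont.tendsto (0:ℝ)
    have hFcont : Continuous fun x : ℝ => F21fin n b c x := by
      unfold F21fin
      exact continuous_finset_sum _ fun k _ => continuous_const.mul (continuous_pow k)
    have hF : Filter.Tendsto (fun r : ℝ => F21fin n b c (1 / (r ^ 2 + 1))) (nhds 0)
        (nhds (F21fin n b c 1)) := (hFcont.tendsto 1).comp harg
    exact ((tendsto_const_nhds.mul (hnum.div hden hone)).mul hF)
  have h2 : K * ((0:ℝ)^l / (1:ℝ) ^ c) * F21fin n b c 1
      = (if l = 0 then 1 else 0) * (2 * (-1 : ℝ) ^ n / Real.Gamma ((M : ℝ) / 2)) *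
        Real.sqrt (((n : ℝ) + ((M : ℝ) - 1) / 2) * Real.Gamma ((n : ℝ) + M - 1) /
          n.factorial) := by
    rcases Nat.eq_zero_or_pos l with hl | hl
    · subst hl
      have hc' : c = (M:ℝ)/2 := by rw [hc]; simp
      have hcpos : (0:ℝ) < c := by
        rw [hc']
        have : (2:ℝ) ≤ M := by exact_mod_cast hM
        linarith
      have hb' : b = (n:ℝ) + 2*c - 1 := by rw [hb, hc']; push_cast; ring
      rw [hb', F21fin_one n c hcpos, Real.one_rpow, if_pos rfl, hK, hc']
      rw [hb]
      simp only [Nat.cast_zero, add_zero, mul_zero, zero_add, pow_zero]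
      ring_nf
    · rw [zero_pow (by omega : l ≠ 0), if_neg (by omega : l ≠ 0)]
      simp
  rw [← h2]
  exact h1.mono_left nhdsWithin_le_nhds
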